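/- arXiv:2410.01163 — 2 statements merged into one kernel-verified Lean document; each statement's English description precedes it below -/
import Mathlib

section
/- Let u ∈ ℝ^n be a unit vector in the column space of Z ∈ ℝ^{n×p} (with Z^⊤Z = n·I_p), written u = n^{−1/2}·Zx with ‖x‖ = 1. Let P_N be the orthogonal projection onto a subspace N spanned by columns r+1,…,K of W (with W^⊤W = n·I_K), and suppose (1/n)·W_{(r+1):K}^⊤ Z_{1:r} = 0 and ‖(1/n)·W_{(r+1):K}^⊤ Z_{(r+1):p}‖ ≤ σ < 1. If P̂_N is another orthogonal projection with ‖P̂_N − P_N‖ ≤ τ and σ + τ < 1, then ‖P̂_N·u‖ ≤ σ‖x‖ + τ < 1. Consequently col(Z) ∩ range(P̂_N) = {0}. -/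
open Matrix

/-- The Euclidean norm of a real vector. -/
noncomputable def enorm {n : Type*} [Fintype n] (x : n → ℝ) : ℝ :=
  Real.sqrt (∑ i, x i ^ 2)

/-- The spectral (ℓ²-operator) norm of a real matrix. -/
noncomputable def specNorm {m n : Type*} [Fintype m] [Fintype n] [DecidableEq n]
    (M : Matrix m n ℝ) : ℝ :=
  ‖LinearMap.toContinuousLinearMap (Matrix.toEuclideanLin M)‖

lemma enorm_eq' {m : Type*} [Fintype m] (x : m → ℝ) :
    _root_.enorm x = ‖(WithLp.equiv 2 (m → ℝ)).symm x‖ := by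
  rw [EuclideanSpace.norm_eq]
  simp [_root_.enorm, Real.norm_eq_abs, sq_abs]

lemma enorm_nonneg' {m : Type*} [Fintype m] (x : m → ℝ) : 0 ≤ _root_.enorm x :=
  Real.sqrt_nonneg _

lemma enorm_smul' {m : Type*} [Fintype m] (c : ℝ) (x : m → ℝ) :
    _root_.enorm (c • x) = |c| * _root_.enorm x := by
  rw [enorm_eq', enorm_eq',
    show (WithLp.equiv 2 (m → ℝ)).symm (c • x) = c • (WithLp.equiv 2 (m → ℝ)).symm x from rfl,
    norm_smul, Real.norm_eq_abs]

lemma enorm_add_le' {m : Type*} [Fintype m] (x y : m → ℝ) :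
    _root_.enorm (x + y) ≤ _root_.enorm x + _root_.enorm y := by
  rw [enorm_eq', enorm_eq', enorm_eq',
    show (WithLp.equiv 2 (m → ℝ)).symm (x + y)
      = (WithLp.equiv 2 (m → ℝ)).symm x + (WithLp.equiv 2 (m → ℝ)).symm y from rfl]
  exact norm_add_le _ _

lemma enorm_eq_zero'' {m : Type*} [Fintype m] {x : m → ℝ} (h : _root_.enorm x = 0) : x = 0 := by
  rw [enorm_eq', norm_eq_zero] at h
  have := congrArg (WithLp.equiv 2 (m → ℝ)) h
  simpa using this

lemma enorm_mulVec_le' {m q : Type*} [Fintype m] [Fintype q] [DecidableEq q]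
    (M : Matrix m q ℝ) (v : q → ℝ) :
    _root_.enorm (M.mulVec v) ≤ specNorm M * _root_.enorm v := by
  rw [enorm_eq', enorm_eq']
  have h := (LinearMap.toContinuousLinearMap (Matrix.toEuclideanLin M)).le_opNorm
      ((WithLp.equiv 2 (q → ℝ)).symm v)
  simpa [specNorm, Matrix.toEuclideanLin_apply_piLp_toLp] using h

lemma specNorm_nonneg' {m q : Type*} [Fintype m] [Fintype q] [DecidableEq q]
    (M : Matrix m q ℝ) : 0 ≤ specNorm M := norm_nonneg _

lemma mulVec_dot' {m q : Type*} [Fintype m] [Fintype q] [DecidableEq q]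
    (A : Matrix m q ℝ) (ν : ℝ) (hA : Aᵀ * A = ν • 1) (c : q → ℝ) :
    (A *ᵥ c) ⬝ᵥ (A *ᵥ c) = ν * (c ⬝ᵥ c) := by
  calc (A *ᵥ c) ⬝ᵥ (A *ᵥ c) = (c ᵥ* Aᵀ) ⬝ᵥ (A *ᵥ c) := by rw [Matrix.vecMul_transpose]
    _ = ((c ᵥ* Aᵀ) ᵥ* A) ⬝ᵥ c := by rw [Matrix.dotProduct_mulVec]
    _ = (c ᵥ* (Aᵀ * A)) ⬝ᵥ c := by rw [Matrix.vecMul_vecMul]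
    _ = ν * (c ⬝ᵥ c) := by
        rw [hA]
        simp [Matrix.vecMul, dotProduct, Matrix.smul_apply, Matrix.one_apply,
          Finset.mul_sum, Finset.sum_mul, mul_comm, mul_assoc, mul_left_comm]

lemma enorm_mulVec_isometry' {m q : Type*} [Fintype m] [Fintype q] [DecidableEq q]
    (A : Matrix m q ℝ) (ν : ℝ) (hν : 0 ≤ ν) (hA : Aᵀ * A = ν • 1) (c : q → ℝ) :
    _root_.enorm (A *ᵥ c) = Real.sqrt ν * _root_.enorm c := by
  unfold _root_.enorm
  rw [← Real.sqrt_mul hν]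
  congr 1
  have h := mulVec_dot' A ν hA c
  simp only [dotProduct] at h
  simpa [pow_two] using h

/-- Geometric step of the uniqueness proof (Corollary 3.1): for a unit vector
`u = n^{-1/2} Z x` in `col(Z)`, if the cross-correlation of `Z` with the
complement block `W_{(r+1):K}` is bounded by `σ < 1`, the first-block
cross-correlation vanishes, and `P̂_N` is an orthogonal projection with
`‖P̂_N − P_N‖ ≤ τ` and `σ + τ < 1`, then `‖P̂_N u‖ ≤ σ‖x‖ + τ < 1`, and
consequently `col(Z) ∩ range(P̂_N) = {0}`. -/
theorem stmt16 {n p k r : ℕ} (hn : 0 < n)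
    (Z : Matrix (Fin n) (Fin p) ℝ) (W : Matrix (Fin n) (Fin k) ℝ)
    (hZ : Zᵀ * Z = (n : ℝ) • 1) (hW : Wᵀ * W = (n : ℝ) • 1)
    (hcross0 : ∀ (j : Fin k) (i : Fin p),
      r ≤ (j : ℕ) → (i : ℕ) < r → (Wᵀ * Z) j i = 0)
    (σ τ : ℝ) (hσ : σ < 1)
    (hcross : specNorm ((n : ℝ)⁻¹ •
      Matrix.of (fun (j : {j : Fin k // r ≤ (j : ℕ)})
        (i : {i : Fin p // r ≤ (i : ℕ)}) => (Wᵀ * Z) j.1 i.1)) ≤ σ)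
    (PN PhatN : Matrix (Fin n) (Fin n) ℝ)
    (hPN : PN = (n : ℝ)⁻¹ •
      (Matrix.of (fun (i : Fin n) (j : {j : Fin k // r ≤ (j : ℕ)}) => W i j.1) *
        Matrix.of (fun (j : {j : Fin k // r ≤ (j : ℕ)}) (i : Fin n) => W i j.1)))
    (hsymm : PhatNᵀ = PhatN) (hidem : PhatN * PhatN = PhatN)
    (hτ : specNorm (PhatN - PN) ≤ τ) (hστ : σ + τ < 1)
    (x : Fin p → ℝ) (hx : _root_.enorm x = 1)
    (u : Fin n → ℝ) (hu : u = (Real.sqrt n)⁻¹ • Z.mulVec x) :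
    _root_.enorm (PhatN.mulVec u) ≤ σ * _root_.enorm x + τ ∧
    _root_.enorm (PhatN.mulVec u) < 1 ∧
    (∀ y : Fin n → ℝ, y ∈ Submodule.span ℝ (Set.range (fun i : Fin p => Zᵀ i)) →
      PhatN.mulVec y = y → y = 0) := by
  have hnR : (0 : ℝ) < n := by exact_mod_cast hn
  have hsn : (0 : ℝ) < Real.sqrt n := Real.sqrt_pos.mpr hnR
  have hσ0 : 0 ≤ σ := le_trans (specNorm_nonneg' _) hcross
  have hτ0 : 0 ≤ τ := le_trans (specNorm_nonneg' _) hτ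
  set B : Matrix (Fin n) {j : Fin k // r ≤ (j : ℕ)} ℝ :=
    Matrix.of (fun (i : Fin n) (j : {j : Fin k // r ≤ (j : ℕ)}) => W i j.1) with hB
  set M : Matrix {j : Fin k // r ≤ (j : ℕ)} {i : Fin p // r ≤ (i : ℕ)} ℝ :=
    Matrix.of (fun (j : {j : Fin k // r ≤ (j : ℕ)})
      (i : {i : Fin p // r ≤ (i : ℕ)}) => (Wᵀ * Z) j.1 i.1) with hM
  have hPN' : PN = (n : ℝ)⁻¹ • (B * Bᵀ) := hPN
  have hBB : Bᵀ * B = (n : ℝ) • (1 : Matrix {j : Fin k // r ≤ (j : ℕ)} _ ℝ) := by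
    ext j j'
    have h1 : (Bᵀ * B) j j' = (Wᵀ * W) j.1 j'.1 := by
      simp [Matrix.mul_apply, hB, Matrix.transpose_apply]
    rw [h1, hW]
    by_cases hjj : j = j'
    · subst hjj; simp [Matrix.smul_apply, Matrix.one_apply]
    · have : j.1 ≠ j'.1 := fun h => hjj (Subtype.ext h)
      simp [Matrix.smul_apply, Matrix.one_apply, this, hjj]
  -- key bound for any unit vector x'
  have key : ∀ x' : Fin p → ℝ, _root_.enorm x' = 1 →
      _root_.enorm (PhatN.mulVec ((Real.sqrt n)⁻¹ • Z.mulVec x')) ≤ σ * _root_.enorm x' + τ := by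
    intro x' hx'
    set u' : Fin n → ℝ := (Real.sqrt n)⁻¹ • Z.mulVec x' with hu'
    have hZx : _root_.enorm (Z *ᵥ x') = Real.sqrt n * _root_.enorm x' :=
      enorm_mulVec_isometry' Z n (le_of_lt hnR) hZ x'
    have hu'norm : _root_.enorm u' = 1 := by
      rw [hu', enorm_smul', hZx, abs_of_pos (inv_pos.mpr hsn), hx']
      field_simp
    -- bound on (PhatN - PN) part
    have hb1 : _root_.enorm ((PhatN - PN).mulVec u') ≤ τ := by
      calc _root_.enorm ((PhatN - PN).mulVec u') ≤ specNorm (PhatN - PN) * _root_.enorm u' :=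
            enorm_mulVec_le' _ _
        _ ≤ τ * 1 := by
            apply mul_le_mul hτ (le_of_eq hu'norm) (enorm_nonneg' _) hτ0
        _ = τ := mul_one τ
    -- PN part
    set xB : {i : Fin p // r ≤ (i : ℕ)} → ℝ := fun i => x' i.1 with hxB
    have hsplit : (Bᵀ * Z) *ᵥ x' = M *ᵥ xB := by
      funext j
      have hent : ∀ i : Fin p, (Bᵀ * Z) j i = (Wᵀ * Z) j.1 i := by
        intro i; simp [Matrix.mul_apply, hB, Matrix.transpose_apply]
      have h0 : ∀ i ∈ Finset.univ.filter (fun i : Fin p => ¬ r ≤ (i : ℕ)),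
          (Wᵀ * Z) j.1 i * x' i = 0 := by
        intro i hi
        rw [hcross0 j.1 i j.2 (Nat.lt_of_not_le (Finset.mem_filter.mp hi).2), zero_mul]
      calc ((Bᵀ * Z) *ᵥ x') j = ∑ i : Fin p, (Wᵀ * Z) j.1 i * x' i := by
            simp only [Matrix.mulVec, dotProduct]
            exact Finset.sum_congr rfl fun i _ => by rw [hent]
        _ = ∑ i ∈ Finset.univ.filter (fun i : Fin p => r ≤ (i : ℕ)),
              (Wᵀ * Z) j.1 i * x' i := by
            rw [← Finset.sum_filter_add_sum_filter_not Finset.univ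
              (fun i : Fin p => r ≤ (i : ℕ)) (fun i => (Wᵀ * Z) j.1 i * x' i),
              Finset.sum_eq_zero h0, add_zero]
        _ = ∑ i' : {i : Fin p // r ≤ (i : ℕ)}, (Wᵀ * Z) j.1 i'.1 * x' i'.1 :=
            Finset.sum_subtype _ (by simp) _
        _ = (M *ᵥ xB) j := by simp [Matrix.mulVec, dotProduct, hM, hxB]
    have hxBle : _root_.enorm xB ≤ _root_.enorm x' := by
      unfold _root_.enorm
      apply Real.sqrt_le_sqrt
      calc ∑ i', xB i' ^ 2
          = ∑ i ∈ Finset.univ.filter (fun i : Fin p => r ≤ (i : ℕ)), x' i ^ 2 :=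
            (Finset.sum_subtype (Finset.univ.filter (fun i : Fin p => r ≤ (i : ℕ)))
              (by simp) (fun i => x' i ^ 2)).symm
        _ ≤ ∑ i : Fin p, x' i ^ 2 :=
            Finset.sum_le_sum_of_subset_of_nonneg (Finset.filter_subset _ _)
              (fun i _ _ => sq_nonneg _)
    have hMx : _root_.enorm (M *ᵥ xB) ≤ (n : ℝ) * (σ * _root_.enorm xB) := by
      have h1 : _root_.enorm (((n : ℝ)⁻¹ • M) *ᵥ xB) ≤ σ * _root_.enorm xB := by
        calc _root_.enorm (((n : ℝ)⁻¹ • M) *ᵥ xB)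
            ≤ specNorm ((n : ℝ)⁻¹ • M) * _root_.enorm xB := enorm_mulVec_le' _ _
          _ ≤ σ * _root_.enorm xB :=
            mul_le_mul_of_nonneg_right hcross (enorm_nonneg' _)
      rw [Matrix.smul_mulVec, enorm_smul',
        abs_of_pos (inv_pos.mpr hnR)] at h1
      calc _root_.enorm (M *ᵥ xB) = (n : ℝ) * ((n : ℝ)⁻¹ * _root_.enorm (M *ᵥ xB)) := by
            field_simp
        _ ≤ (n : ℝ) * (σ * _root_.enorm xB) :=
            mul_le_mul_of_nonneg_left h1 (le_of_lt hnR)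
    have hw : Bᵀ *ᵥ u' = (Real.sqrt n)⁻¹ • (M *ᵥ xB) := by
      rw [hu', Matrix.mulVec_smul, Matrix.mulVec_mulVec, hsplit]
    have hb2 : _root_.enorm (PN.mulVec u') ≤ σ * _root_.enorm x' := by
      have hPu : PN.mulVec u' = (n : ℝ)⁻¹ • (B *ᵥ (Bᵀ *ᵥ u')) := by
        rw [hPN', Matrix.smul_mulVec, ← Matrix.mulVec_mulVec]
      have hBw : _root_.enorm (B *ᵥ (Bᵀ *ᵥ u')) = Real.sqrt n * _root_.enorm (Bᵀ *ᵥ u') :=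
        enorm_mulVec_isometry' B n (le_of_lt hnR) hBB _
      have hwnorm : _root_.enorm (Bᵀ *ᵥ u') ≤ (Real.sqrt n)⁻¹ * ((n : ℝ) * (σ * _root_.enorm xB)) := by
        rw [hw, enorm_smul', abs_of_pos (inv_pos.mpr hsn)]
        exact mul_le_mul_of_nonneg_left hMx (le_of_lt (inv_pos.mpr hsn))
      have hsq : Real.sqrt n * Real.sqrt n = (n : ℝ) := Real.mul_self_sqrt (le_of_lt hnR)
      calc _root_.enorm (PN.mulVec u') = (n : ℝ)⁻¹ * (Real.sqrt n * _root_.enorm (Bᵀ *ᵥ u')) := by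
            rw [hPu, enorm_smul', abs_of_pos (inv_pos.mpr hnR), hBw]
        _ ≤ (n : ℝ)⁻¹ * (Real.sqrt n * ((Real.sqrt n)⁻¹ * ((n : ℝ) * (σ * _root_.enorm xB)))) := by
            apply mul_le_mul_of_nonneg_left _ (le_of_lt (inv_pos.mpr hnR))
            exact mul_le_mul_of_nonneg_left hwnorm (le_of_lt hsn)
        _ = σ * _root_.enorm xB := by field_simp
        _ ≤ σ * _root_.enorm x' := mul_le_mul_of_nonneg_left hxBle hσ0
    -- combine
    have hdecomp : PhatN.mulVec u' = (PhatN - PN).mulVec u' + PN.mulVec u' := by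
      rw [Matrix.sub_mulVec]; abel
    calc _root_.enorm (PhatN.mulVec u')
        ≤ _root_.enorm ((PhatN - PN).mulVec u') + _root_.enorm (PN.mulVec u') := by
          rw [hdecomp]; exact enorm_add_le' _ _
      _ ≤ τ + σ * _root_.enorm x' := add_le_add hb1 hb2
      _ = σ * _root_.enorm x' + τ := by ring
  have part1 : _root_.enorm (PhatN.mulVec u) ≤ σ * _root_.enorm x + τ := by
    rw [hu]; exact key x hx
  have part2 : _root_.enorm (PhatN.mulVec u) < 1 := by
    rw [hx] at part1; linarith [part1]
  refine ⟨part1, part2, ?_⟩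
  intro y hy hPy
  by_contra hy0
  obtain ⟨c, hc⟩ := (Submodule.mem_span_range_iff_exists_fun ℝ).mp hy
  have hyc : y = Z *ᵥ c := by
    funext j
    rw [← hc]
    simp [Matrix.mulVec, dotProduct, Finset.sum_apply, Matrix.transpose_apply, mul_comm]
  have he : 0 < _root_.enorm y :=
    lt_of_le_of_ne (enorm_nonneg' _) (fun h => hy0 (enorm_eq_zero'' h.symm))
  set e := _root_.enorm y with hee
  have hZc : _root_.enorm (Z *ᵥ c) = Real.sqrt n * _root_.enorm c :=
    enorm_mulVec_isometry' Z n (le_of_lt hnR) hZ c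
  have hce : _root_.enorm c = e / Real.sqrt n := by
    rw [hee, hyc, hZc]; field_simp
  set x' : Fin p → ℝ := (Real.sqrt n / e) • c with hx'def
  have hx' : _root_.enorm x' = 1 := by
    rw [hx'def, enorm_smul', hce, abs_of_pos (by positivity)]
    field_simp
  have hu'y : (Real.sqrt n)⁻¹ • Z.mulVec x' = e⁻¹ • y := by
    rw [hx'def, Matrix.mulVec_smul, smul_smul, hyc]
    congr 1
    field_simp
  have hcontr := key x' hx'
  rw [hu'y, hx'] at hcontr
  have hfix : PhatN.mulVec (e⁻¹ • y) = e⁻¹ • y := by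
    rw [Matrix.mulVec_smul, hPy]
  rw [hfix, enorm_smul', abs_of_pos (inv_pos.mpr he), ← hee, inv_mul_cancel₀ (ne_of_gt he)]
    at hcontr
  linarith
end

section
/- Let (Uᵢ)_{i≥1} be independent real random variables with E[Uᵢ] = 0 and sup_i E|Uᵢ|^{1+ζ} < ∞ for some ζ > 0. Let (aᵢ) be real scalars with Σ_{i=1}^n |aᵢ| = O(n) and max_{1≤i≤n} |aᵢ| = o(n). Then (1/n)·Σ_{i=1}^n aᵢUᵢ → 0 in probability. -/
open MeasureTheory ProbabilityTheory

/-- Weighted weak law of large numbers (Lemma 5.1 of Stefanski 1985):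
for independent mean-zero `Uᵢ` with uniformly bounded `(1+ζ)`-th absolute
moments, and scalars `aᵢ` with `Σ_{i<n}|aᵢ| = O(n)` and
`max_{i<n}|aᵢ| = o(n)`, one has `(1/n) Σ_{i<n} aᵢUᵢ → 0` in probability. -/
theorem stmt19 {Ω : Type*} [MeasurableSpace Ω] (μ : Measure Ω)
    [IsProbabilityMeasure μ]
    (U : ℕ → Ω → ℝ) (hmeas : ∀ i, Measurable (U i))
    (hindep : iIndepFun U μ)
    (hint : ∀ i, Integrable (U i) μ)
    (hmean : ∀ i, ∫ ω, U i ω ∂μ = 0)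
    (ζ : ℝ) (hζ : 0 < ζ) (M : ℝ)
    (hmom : ∀ i, Integrable (fun ω => |U i ω| ^ (1 + ζ)) μ)
    (hmomB : ∀ i, ∫ ω, |U i ω| ^ (1 + ζ) ∂μ ≤ M)
    (a : ℕ → ℝ)
    (hO : ∃ C : ℝ, ∀ n : ℕ, ∑ i ∈ Finset.range n, |a i| ≤ C * n)
    (ho : ∀ ε : ℝ, 0 < ε → ∃ N : ℕ, ∀ n ≥ N, ∀ i < n, |a i| ≤ ε * n) :
    ∀ ε : ℝ, 0 < ε →
      Filter.Tendsto (fun n : ℕ =>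
          μ {ω | ε ≤ |(n : ℝ)⁻¹ * ∑ i ∈ Finset.range n, a i * U i ω|})
        Filter.atTop (nhds 0) := by
  intro ε hε
  obtain ⟨C₀, hC₀⟩ := hO
  set C : ℝ := max C₀ 1 with hCdef
  have hCpos : (0:ℝ) < C := lt_of_lt_of_le one_pos (le_max_right _ _)
  have hC : ∀ n : ℕ, ∑ i ∈ Finset.range n, |a i| ≤ C * n := fun n =>
    (hC₀ n).trans (mul_le_mul_of_nonneg_right (le_max_left _ _) (Nat.cast_nonneg n))
  have hM : (0:ℝ) ≤ M :=
    le_trans (integral_nonneg fun ω => Real.rpow_nonneg (abs_nonneg _) _) (hmomB 0)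
  set M' : ℝ := M + 1 with hM'def
  have hM' : (0:ℝ) < M' := by positivity
  have hmomB' : ∀ i, ∫ ω, |U i ω| ^ (1 + ζ) ∂μ ≤ M' := fun i => (hmomB i).trans (by simp [hM'def])
  rw [ENNReal.tendsto_atTop_zero]
  intro δ hδ
  obtain ⟨d, hd, hdδ⟩ : ∃ d : ℝ, 0 < d ∧ ENNReal.ofReal d ≤ δ := by
    rcases eq_or_ne δ ⊤ with h | h
    · exact ⟨1, one_pos, h ▸ le_top⟩
    · exact ⟨δ.toReal, ENNReal.toReal_pos hδ.ne' h, by rw [ENNReal.ofReal_toReal h]⟩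
  set θ : ℝ := min (ε/3) (ε*d/6) with hθdef
  have hθ : 0 < θ := lt_min (by positivity) (by positivity)
  obtain ⟨K, hK1, hKb⟩ : ∃ K : ℝ, 1 ≤ K ∧ C * M' / θ ≤ K ^ ζ := by
    have h1 := (tendsto_rpow_atTop hζ).eventually_ge_atTop (C * M' / θ)
    obtain ⟨K, hK⟩ := (h1.and (Filter.eventually_ge_atTop 1)).exists
    exact ⟨K, hK.2, hK.1⟩
  have hK0 : (0:ℝ) < K := lt_of_lt_of_le one_pos hK1
  have hKζ : (0:ℝ) < K ^ ζ := Real.rpow_pos_of_pos hK0 ζ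
  have hkey : C * M' / K ^ ζ ≤ θ := by
    rw [div_le_iff₀ hKζ]
    calc C * M' = (C * M' / θ) * θ := by field_simp
    _ ≤ K ^ ζ * θ := mul_le_mul_of_nonneg_right hKb hθ.le
    _ = θ * K ^ ζ := mul_comm _ _
  have hkey1 : C * M' / K ^ ζ ≤ ε/3 := hkey.trans (min_le_left _ _)
  have hkey2 : C * M' / K ^ ζ ≤ ε*d/6 := hkey.trans (min_le_right _ _)
  -- truncation
  set φf : ℝ → ℝ := fun x => if |x| ≤ K then x else 0 with hφdef
  have hφm : Measurable φf :=
    Measurable.ite (measurableSet_le (_root_.measurable_abs) measurable_const)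
      measurable_id measurable_const
  have hφbd : ∀ x, |φf x| ≤ K := by
    intro x; by_cases h : |x| ≤ K
    · simpa [hφdef, h] using h
    · simp [hφdef, h, hK0.le]
  have hψbd : ∀ x, |x - φf x| ≤ |x| ^ (1+ζ) / K ^ ζ := by
    intro x; by_cases h : |x| ≤ K
    · simp only [hφdef, if_pos h, sub_self, abs_zero]
      positivity
    · have h' : K < |x| := not_le.mp h
      have hx0 : 0 < |x| := lt_trans hK0 h'
      simp only [hφdef, if_neg h, sub_zero]
      rw [le_div_iff₀ hKζ]
      calc |x| * K ^ ζ ≤ |x| * |x| ^ ζ := by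
            exact mul_le_mul_of_nonneg_left (Real.rpow_le_rpow hK0.le h'.le hζ.le) hx0.le
      _ = |x| ^ (1+ζ) := by rw [Real.rpow_add hx0, Real.rpow_one]
  set Y : ℕ → Ω → ℝ := fun i ω => φf (U i ω) with hYdef
  have hYmeas : ∀ i, Measurable (Y i) := fun i => hφm.comp (hmeas i)
  have hYbd : ∀ i ω, |Y i ω| ≤ K := fun i ω => hφbd _
  have hYmem : ∀ i, MemLp (Y i) 2 μ := fun i =>
    MemLp.of_bound (hYmeas i).aestronglyMeasurable K
      (Filter.Eventually.of_forall fun ω => by simpa [Real.norm_eq_abs] using hYbd i ω)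
  have hYint : ∀ i, Integrable (Y i) μ := fun i => (hYmem i).integrable one_le_two
  set Z : ℕ → Ω → ℝ := fun i ω => U i ω - Y i ω with hZdef
  have hZint : ∀ i, Integrable (Z i) μ := fun i => (hint i).sub (hYint i)
  have hZabs : ∀ i, ∫ ω, |Z i ω| ∂μ ≤ M' / K ^ ζ := by
    intro i
    calc ∫ ω, |Z i ω| ∂μ ≤ ∫ ω, |U i ω| ^ (1+ζ) / K ^ ζ ∂μ := by
          refine integral_mono (hZint i).abs ((hmom i).div_const _) fun ω => ?_
          exact hψbd (U i ω)
    _ = (∫ ω, |U i ω| ^ (1+ζ) ∂μ) / K ^ ζ := integral_div _ _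
    _ ≤ M' / K ^ ζ := (div_le_div_iff_of_pos_right hKζ).mpr (hmomB' i)
  set m : ℕ → ℝ := fun i => ∫ ω, Y i ω ∂μ with hmdef
  have hmbd : ∀ i, |m i| ≤ M' / K ^ ζ := by
    intro i
    have h0 : m i = - ∫ ω, Z i ω ∂μ := by
      have h1 : ∫ ω, Z i ω ∂μ = (∫ ω, U i ω ∂μ) - ∫ ω, Y i ω ∂μ :=
        integral_sub (hint i) (hYint i)
      rw [hmdef]; rw [h1, hmean i]; ring
    rw [h0, abs_neg]
    refine le_trans ?_ (hZabs i)
    simpa [Real.norm_eq_abs] using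
      norm_integral_le_integral_norm (μ := μ) (fun ω => Z i ω)
  -- centered truncated variables
  set g : ℕ → ℝ → ℝ := fun i x => a i * (φf x - m i) with hgdef
  have hgm : ∀ i, Measurable (g i) := fun i => measurable_const.mul (hφm.sub measurable_const)
  set X : ℕ → Ω → ℝ := fun i => g i ∘ U i with hXdef
  have hXmeas : ∀ i, Measurable (X i) := fun i => (hgm i).comp (hmeas i)
  set B : ℝ := K + M' / K ^ ζ with hBdef
  have hBpos : (0:ℝ) < B := by positivity
  have hXval : ∀ i ω, X i ω = a i * (Y i ω - m i) := fun i ω => rfl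
  have hXbd : ∀ i ω, |X i ω| ≤ |a i| * B := by
    intro i ω
    rw [hXval, abs_mul]
    refine mul_le_mul_of_nonneg_left ?_ (abs_nonneg _)
    calc |Y i ω - m i| ≤ |Y i ω| + |m i| := abs_sub _ _
    _ ≤ K + M' / K ^ ζ := add_le_add (hYbd i ω) (hmbd i)
  have hXmem : ∀ i, MemLp (X i) 2 μ := fun i =>
    MemLp.of_bound (hXmeas i).aestronglyMeasurable _
      (Filter.Eventually.of_forall fun ω => by simpa [Real.norm_eq_abs] using hXbd i ω)
  have hXint : ∀ i, Integrable (X i) μ := fun i => (hXmem i).integrable one_le_two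
  have hXmean : ∀ i, ∫ ω, X i ω ∂μ = 0 := by
    intro i
    have h1 : ∫ ω, X i ω ∂μ = a i * ((∫ ω, Y i ω ∂μ) - m i) := by
      simp only [hXval]
      rw [integral_const_mul, integral_sub (hYint i) (integrable_const _), integral_const]
      simp
    rw [h1, hmdef]
    simp
  have hvar : ∀ i, variance (X i) μ ≤ (|a i| * B)^2 := by
    intro i
    refine (variance_le_expectation_sq (hXmeas i).aestronglyMeasurable).trans ?_
    have hb : ∀ ω, (X i ω)^2 ≤ (|a i| * B)^2 := fun ω => by
      calc (X i ω)^2 = |X i ω|^2 := (sq_abs _).symm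
      _ ≤ (|a i| * B)^2 := pow_le_pow_left₀ (abs_nonneg _) (hXbd i ω) 2
    calc μ[(X i)^2] = ∫ ω, (X i ω)^2 ∂μ := by simp [Pi.pow_apply]
    _ ≤ ∫ _ω, (|a i| * B)^2 ∂μ := integral_mono ((hXmem i).integrable_sq) (integrable_const _) hb
    _ = (|a i| * B)^2 := by simp
  have hXindep : ∀ ⦃i j : ℕ⦄, i ≠ j → IndepFun (X i) (X j) μ := fun i j hij =>
    (hindep.indepFun hij).comp (hgm i) (hgm j)
  -- choose N
  set η : ℝ := d * ε^2 / (36 * B^2 * C) with hηdef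
  have hηpos : 0 < η := by positivity
  obtain ⟨N₀, hN₀⟩ := ho η hηpos
  refine ⟨max N₀ 1, fun n hn => ?_⟩
  have hn1 : 1 ≤ n := le_trans (le_max_right _ _) hn
  have hnN : N₀ ≤ n := le_trans (le_max_left _ _) hn
  have hnpos : (0:ℝ) < n := by exact_mod_cast hn1
  have hne3 : (0:ℝ) < n * (ε/3) := by positivity
  -- decomposition
  have hdecomp : ∀ ω, ∑ i ∈ Finset.range n, a i * U i ω =
      (∑ i ∈ Finset.range n, X i ω) + (∑ i ∈ Finset.range n, a i * Z i ω)
        + (∑ i ∈ Finset.range n, a i * m i) := by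
    intro ω
    rw [← Finset.sum_add_distrib, ← Finset.sum_add_distrib]
    refine Finset.sum_congr rfl fun i _ => ?_
    rw [hXval, hZdef]
    ring
  have hcbd : |∑ i ∈ Finset.range n, a i * m i| ≤ n * (ε/3) := by
    calc |∑ i ∈ Finset.range n, a i * m i| ≤ ∑ i ∈ Finset.range n, |a i * m i| :=
          Finset.abs_sum_le_sum_abs _ _
    _ ≤ ∑ i ∈ Finset.range n, |a i| * (M'/K^ζ) := Finset.sum_le_sum fun i _ => by
          rw [abs_mul]; exact mul_le_mul_of_nonneg_left (hmbd i) (abs_nonneg _)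
    _ = (∑ i ∈ Finset.range n, |a i|) * (M'/K^ζ) := (Finset.sum_mul _ _ _).symm
    _ ≤ (C * n) * (M'/K^ζ) := mul_le_mul_of_nonneg_right (hC n) (by positivity)
    _ = n * (C * M' / K^ζ) := by ring
    _ ≤ n * (ε/3) := mul_le_mul_of_nonneg_left hkey1 hnpos.le
  set T : Ω → ℝ := fun ω => ∑ i ∈ Finset.range n, X i ω with hTdef
  set S : Ω → ℝ := fun ω => ∑ i ∈ Finset.range n, a i * Z i ω with hSdef
  have hsub : {ω | ε ≤ |(n:ℝ)⁻¹ * ∑ i ∈ Finset.range n, a i * U i ω|} ⊆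
      {ω | n * (ε/3) ≤ |T ω|} ∪ {ω | n * (ε/3) ≤ |S ω|} := by
    intro ω hω
    simp only [Set.mem_setOf_eq] at hω
    by_contra hcon
    simp only [Set.mem_union, Set.mem_setOf_eq, not_or, not_le] at hcon
    obtain ⟨h1, h2⟩ := hcon
    have habs : |∑ i ∈ Finset.range n, a i * U i ω| ≤ |T ω| + |S ω|
        + |∑ i ∈ Finset.range n, a i * m i| := by
      rw [hdecomp ω]
      exact (abs_add_le _ _).trans (add_le_add (abs_add_le _ _) le_rfl)
    rw [abs_mul, abs_inv, abs_of_nonneg (by positivity : (0:ℝ) ≤ (n:ℝ)), inv_mul_eq_div,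
      le_div_iff₀ hnpos] at hω
    have hω' : (n:ℝ) * ε ≤ |∑ i ∈ Finset.range n, a i * U i ω| := by
      rw [mul_comm]; exact hω
    linarith
  refine le_trans (measure_mono hsub) (le_trans (measure_union_le _ _) ?_)
  -- Chebyshev for T
  have heqT : (∑ i ∈ Finset.range n, X i) = T := by
    funext ω; rw [hTdef]; simp [Finset.sum_apply]
  have hTmem : MemLp T 2 μ := by
    rw [← heqT]; exact memLp_finset_sum' _ fun i _ => hXmem i
  have hTmean : μ[T] = 0 := by
    rw [hTdef]
    rw [integral_finset_sum _ fun i _ => hXint i]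
    exact Finset.sum_eq_zero fun i _ => hXmean i
  have hvarsum : variance T μ = ∑ i ∈ Finset.range n, variance (X i) μ := by
    rw [← heqT]
    exact IndepFun.variance_sum (fun i _ => hXmem i) fun i _ j _ hij => hXindep hij
  have hvarbd : variance T μ ≤ d * ε^2 * n^2 / 36 := by
    rw [hvarsum]
    have step : ∑ i ∈ Finset.range n, variance (X i) μ ≤
        ∑ i ∈ Finset.range n, (η * n * |a i|) * B^2 := by
      refine Finset.sum_le_sum fun i hi => (hvar i).trans ?_
      have hai : |a i| ≤ η * n := hN₀ n hnN i (Finset.mem_range.mp hi)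
      have h2 : |a i|^2 ≤ η * n * |a i| :=  by nlinarith [abs_nonneg (a i)]
      calc (|a i| * B)^2 = |a i|^2 * B^2 := by ring
      _ ≤ (η * n * |a i|) * B^2 := mul_le_mul_of_nonneg_right h2 (sq_nonneg B)
    refine step.trans ?_
    have hsum2 : ∑ i ∈ Finset.range n, (η * n * |a i|) * B^2
        = (∑ i ∈ Finset.range n, |a i|) * (η * n * B^2) := by
      rw [Finset.sum_mul]
      exact Finset.sum_congr rfl fun i _ => by ring
    rw [hsum2]
    calc (∑ i ∈ Finset.range n, |a i|) * (η * n * B^2)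
        ≤ (C * n) * (η * n * B^2) := mul_le_mul_of_nonneg_right (hC n) (by positivity)
    _ = η * C * B^2 * n^2 := by ring
    _ = d * ε^2 * n^2 / 36 := by
        rw [hηdef]; field_simp
  have hcheb : μ {ω | n * (ε/3) ≤ |T ω|} ≤ ENNReal.ofReal (d/2) := by
    have h := meas_ge_le_variance_div_sq (μ := μ) hTmem hne3
    rw [hTmean] at h
    simp only [sub_zero] at h
    refine h.trans (ENNReal.ofReal_le_ofReal ?_)
    rw [div_le_iff₀ (by positivity : (0:ℝ) < ((n:ℝ) * (ε/3))^2)]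
    calc variance T μ ≤ d * ε^2 * n^2 / 36 := hvarbd
    _ ≤ d * ε^2 * n^2 / 18 := by
        have : (0:ℝ) ≤ d * ε^2 * n^2 := by positivity
        linarith
    _ = d/2 * ((n:ℝ) * (ε/3))^2 := by ring
  -- Markov for S
  have hSmeas : Measurable S := by
    rw [hSdef]
    exact Finset.measurable_sum _ fun i _ => (((hmeas i).sub (hYmeas i)).const_mul (a i))
  have hSint : Integrable S μ := by
    rw [hSdef]
    exact integrable_finset_sum _ fun i _ => ((hZint i).const_mul (a i))
  have hSabs : ∫ ω, |S ω| ∂μ ≤ n * (ε*d/6) := by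
    have habs : ∀ ω, |S ω| ≤ ∑ i ∈ Finset.range n, |a i| * |Z i ω| := fun ω => by
      rw [hSdef]
      refine (Finset.abs_sum_le_sum_abs _ _).trans (le_of_eq ?_)
      exact Finset.sum_congr rfl fun i _ => abs_mul _ _
    calc ∫ ω, |S ω| ∂μ ≤ ∫ ω, ∑ i ∈ Finset.range n, |a i| * |Z i ω| ∂μ := by
          refine integral_mono hSint.abs ?_ habs
          exact integrable_finset_sum _ fun i _ => ((hZint i).abs.const_mul _)
    _ = ∑ i ∈ Finset.range n, ∫ ω, |a i| * |Z i ω| ∂μ :=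
          integral_finset_sum _ fun i _ => ((hZint i).abs.const_mul _)
    _ = ∑ i ∈ Finset.range n, |a i| * ∫ ω, |Z i ω| ∂μ :=
          Finset.sum_congr rfl fun i _ => integral_const_mul _ _
    _ ≤ ∑ i ∈ Finset.range n, |a i| * (M'/K^ζ) :=
          Finset.sum_le_sum fun i _ => mul_le_mul_of_nonneg_left (hZabs i) (abs_nonneg _)
    _ = (∑ i ∈ Finset.range n, |a i|) * (M'/K^ζ) := (Finset.sum_mul _ _ _).symm
    _ ≤ (C * n) * (M'/K^ζ) := mul_le_mul_of_nonneg_right (hC n) (by positivity)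
    _ = n * (C * M' / K^ζ) := by ring
    _ ≤ n * (ε*d/6) := mul_le_mul_of_nonneg_left hkey2 hnpos.le
  have hmarkov : μ {ω | n * (ε/3) ≤ |S ω|} ≤ ENNReal.ofReal (d/2) := by
    have hset : {ω | (n:ℝ) * (ε/3) ≤ |S ω|}
        = {ω | ENNReal.ofReal ((n:ℝ) * (ε/3)) ≤ ENNReal.ofReal |S ω|} := by
      ext ω; simp only [Set.mem_setOf_eq, ENNReal.ofReal_le_ofReal_iff (abs_nonneg _)]
    rw [hset]
    refine le_trans (meas_ge_le_lintegral_div (μ := μ)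
      (f := fun ω => ENNReal.ofReal |S ω|) hSmeas.abs.ennreal_ofReal.aemeasurable
      (by simpa using (ENNReal.ofReal_pos.mpr hne3).ne') ENNReal.ofReal_ne_top) ?_
    rw [← ofReal_integral_eq_lintegral_ofReal hSint.abs
      (Filter.Eventually.of_forall fun ω => abs_nonneg _)]
    rw [← ENNReal.ofReal_div_of_pos hne3]
    refine ENNReal.ofReal_le_ofReal ?_
    rw [div_le_iff₀ hne3]
    calc ∫ ω, |S ω| ∂μ ≤ n * (ε*d/6) := hSabs
    _ = d/2 * ((n:ℝ) * (ε/3)) := by ring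
  calc μ {ω | n * (ε/3) ≤ |T ω|} + μ {ω | n * (ε/3) ≤ |S ω|}
      ≤ ENNReal.ofReal (d/2) + ENNReal.ofReal (d/2) := add_le_add hcheb hmarkov
  _ = ENNReal.ofReal d := by
      rw [← ENNReal.ofReal_add (by positivity) (by positivity)]
      norm_num
  _ ≤ δ := hdδ
end
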